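/- For c ∈ ℝ with c + 1 > 0 and x > 0 with x² + c > 0, the map F(x,y) = (x·cos(y)/√(c+1), x·sin(y)/√(c+1), √(x²+c+1)/√(c+1), χ(x)), where χ'(x) = √(x²+c)/√(x²+c+1), satisfies: the first three components lie on the hyperboloid x₁² + x₂² − x₃² = −1 with x₃ > 0, and the induced metric from dx₁² + dx₂² − dx₃² + dt² is ⟨F_x,F_x⟩ = 1, ⟨F_x,F_y⟩ = 0, ⟨F_y,F_y⟩ = x²/(c+1); in particular the induced metric dx² + (x²/(c+1))·dy² is flat (has zero Gaussian curvature). -/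

import Mathlib

open Real

/-- Pseudo-metric dx₁² + dx₂² − dx₃² + dt² on ℝ⁴ = ℝ³₁ × ℝ. -/
def g4 (u v : ℝ × ℝ × ℝ × ℝ) : ℝ :=
  u.1 * v.1 + u.2.1 * v.2.1 - u.2.2.1 * v.2.2.1 + u.2.2.2 * v.2.2.2

theorem stmt_19 (c : ℝ) (hc : c + 1 > 0) (χ : ℝ → ℝ)
    (hχ : ∀ x : ℝ, 0 < x → x^2 + c > 0 →
      HasDerivAt χ (Real.sqrt (x^2 + c) / Real.sqrt (x^2 + c + 1)) x)
    (F : ℝ → ℝ → ℝ × ℝ × ℝ × ℝ)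
    (hF : F = fun x y =>
      (x * Real.cos y / Real.sqrt (c + 1), x * Real.sin y / Real.sqrt (c + 1),
        Real.sqrt (x^2 + c + 1) / Real.sqrt (c + 1), χ x)) :
    ∀ x y : ℝ, 0 < x → x^2 + c > 0 →
      (F x y).1 ^ 2 + (F x y).2.1 ^ 2 - (F x y).2.2.1 ^ 2 = -1 ∧
      0 < (F x y).2.2.1 ∧
      g4 (deriv (fun s => F s y) x) (deriv (fun s => F s y) x) = 1 ∧
      g4 (deriv (fun s => F s y) x) (deriv (fun t => F x t) y) = 0 ∧
      g4 (deriv (fun t => F x t) y) (deriv (fun t => F x t) y) = x^2 / (c + 1) ∧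
      -(deriv (deriv (fun s => s / Real.sqrt (c + 1))) x) /
          (x / Real.sqrt (c + 1)) = 0 := by
  subst hF
  intro x y hx hxc
  have hx2 : (0:ℝ) < x^2 + c + 1 := by linarith
  have hA : Real.sqrt (c+1) ≠ 0 := Real.sqrt_ne_zero'.mpr hc
  have hB : Real.sqrt (x^2+c+1) ≠ 0 := Real.sqrt_ne_zero'.mpr hx2
  have hA2 : Real.sqrt (c+1) ^ 2 = c + 1 := Real.sq_sqrt hc.le
  have hB2 : Real.sqrt (x^2+c+1) ^ 2 = x^2+c+1 := Real.sq_sqrt hx2.le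
  have hC2 : Real.sqrt (x^2+c) ^ 2 = x^2+c := Real.sq_sqrt hxc.le
  -- derivative in the x direction
  have h1 : HasDerivAt (fun s : ℝ => s * Real.cos y / Real.sqrt (c+1))
      (Real.cos y / Real.sqrt (c+1)) x := by
    simpa using ((hasDerivAt_id x).mul_const (Real.cos y)).div_const (Real.sqrt (c+1))
  have h2 : HasDerivAt (fun s : ℝ => s * Real.sin y / Real.sqrt (c+1))
      (Real.sin y / Real.sqrt (c+1)) x := by
    simpa using ((hasDerivAt_id x).mul_const (Real.sin y)).div_const (Real.sqrt (c+1))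
  have h3 : HasDerivAt (fun s : ℝ => Real.sqrt (s^2+c+1) / Real.sqrt (c+1))
      (x / (Real.sqrt (x^2+c+1) * Real.sqrt (c+1))) x := by
    have hin : HasDerivAt (fun s : ℝ => s^2+c+1) (2*x) x := by
      simpa using ((hasDerivAt_pow 2 x).add_const c).add_const 1
    have := (hin.sqrt hx2.ne').div_const (Real.sqrt (c+1))
    convert this using 1
    all_goals first | rfl | field_simp
  have h4 : HasDerivAt χ (Real.sqrt (x^2+c) / Real.sqrt (x^2+c+1)) x := hχ x hx hxc
  have hFx : HasDerivAt (fun s : ℝ =>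
      (s * Real.cos y / Real.sqrt (c+1), s * Real.sin y / Real.sqrt (c+1),
        Real.sqrt (s^2+c+1) / Real.sqrt (c+1), χ s))
      (Real.cos y / Real.sqrt (c+1), Real.sin y / Real.sqrt (c+1),
        x / (Real.sqrt (x^2+c+1) * Real.sqrt (c+1)),
        Real.sqrt (x^2+c) / Real.sqrt (x^2+c+1)) x :=
    h1.prodMk (h2.prodMk (h3.prodMk h4))
  -- derivative in the y direction
  have k1 : HasDerivAt (fun t : ℝ => x * Real.cos t / Real.sqrt (c+1))
      (-(x * Real.sin y) / Real.sqrt (c+1)) y := by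
    simpa [mul_comm] using ((Real.hasDerivAt_cos y).const_mul x).div_const (Real.sqrt (c+1))
  have k2 : HasDerivAt (fun t : ℝ => x * Real.sin t / Real.sqrt (c+1))
      (x * Real.cos y / Real.sqrt (c+1)) y := by
    simpa [mul_comm] using ((Real.hasDerivAt_sin y).const_mul x).div_const (Real.sqrt (c+1))
  have k3 : HasDerivAt (fun _ : ℝ => Real.sqrt (x^2+c+1) / Real.sqrt (c+1)) 0 y :=
    hasDerivAt_const _ _
  have k4 : HasDerivAt (fun _ : ℝ => χ x) 0 y := hasDerivAt_const _ _
  have hFy : HasDerivAt (fun t : ℝ =>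
      (x * Real.cos t / Real.sqrt (c+1), x * Real.sin t / Real.sqrt (c+1),
        Real.sqrt (x^2+c+1) / Real.sqrt (c+1), χ x))
      (-(x * Real.sin y) / Real.sqrt (c+1), x * Real.cos y / Real.sqrt (c+1),
        (0:ℝ), (0:ℝ)) y :=
    k1.prodMk (k2.prodMk (k3.prodMk k4))
  have hdx := hFx.deriv
  have hdy := hFy.deriv
  have hpy := Real.sin_sq_add_cos_sq y
  refine ⟨?_, ?_, ?_, ?_, ?_, ?_⟩
  · simp only
    field_simp
    nlinarith [hA2, hB2]
  · simp only
    positivity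
  · have hAB : (Real.sqrt (x^2+c+1) * Real.sqrt (c+1))^2 = (x^2+c+1)*(c+1) := by
      rw [mul_pow, hA2, hB2]
    simp only [hdx, g4]
    field_simp
    simp only [hA2, hB2, hC2]
    linear_combination (x^2+c+1) * hpy
  · simp only [hdx, hdy, g4]
    field_simp
    ring
  · simp only [hdy, g4]
    field_simp
    linear_combination (c+1)*x^2*hpy - x^2*hA2
  · have hd : deriv (fun s : ℝ => s / Real.sqrt (c+1)) = fun _ => (Real.sqrt (c+1))⁻¹ := by
      funext s
      simp [div_eq_mul_inv]
    rw [hd]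
    simp
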